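/- For T ≥ 2 the determinant of A_T satisfies det A_T = ((1 + β²(T-1))/2) · det A_{T-1}. -/

import Mathlib

open Finset

/-- θ_j^T = (T+1-j) - (T-j)α. -/
noncomputable def theta (α : ℝ) (T j : ℕ) : ℝ := ((T : ℝ) + 1 - j) - ((T : ℝ) - j) * α

/-- Entry a_{ik} of the matrix A_T, for 1-based indices with k ≤ i. -/
noncomputable def entryLow (α : ℝ) (T i k : ℕ) : ℝ :=
  if i = k then
    (if i = T then (1 : ℝ) / 2
     else 1 / 2 + (α - 1) ^ 2 * ∑ j ∈ Finset.Icc i (T - 1), theta α T (j + 1) * α ^ (2 * j - 2 * i))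
  else if i = T then (α - 1) * α ^ (T - k - 1) / 2
  else (α - 1) * theta α T i * α ^ (i - k - 1) / 2
        + (α - 1) ^ 2 * ∑ j ∈ Finset.Icc i (T - 1), theta α T (j + 1) * α ^ (2 * j - i - k)

/-- Entry a_{ik} of A_T (extended symmetrically), 1-based indices. -/
noncomputable def entryA (α : ℝ) (T i k : ℕ) : ℝ :=
  if k ≤ i then entryLow α T i k else entryLow α T k i

/-- The symmetric T×T matrix A_T. -/
noncomputable def Amat (α : ℝ) (T : ℕ) : Matrix (Fin T) (Fin T) ℝ :=
  fun i k => entryA α T (i.1 + 1) (k.1 + 1)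

lemma theta_eq (α : ℝ) (T j : ℕ) : theta α T j = 1 - (α - 1) * ((T : ℝ) - (j : ℝ)) := by
  unfold theta; ring

lemma theta_succ (α : ℝ) (T j : ℕ) : theta α T j = theta α T (j + 1) - (α - 1) := by
  unfold theta; push_cast; ring

lemma theta_T (α : ℝ) (T : ℕ) : theta α T T = 1 := by unfold theta; ring

lemma sum_Icc_split (f : ℕ → ℝ) (a b c : ℕ) (hab : a ≤ b + 1) (hbc : b ≤ c) :
    ∑ m ∈ Icc a c, f m = ∑ m ∈ Icc a b, f m + ∑ m ∈ Icc (b + 1) c, f m := by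
  have h : Icc a c = Icc a b ∪ Icc (b + 1) c := by
    ext x; simp only [mem_Icc, mem_union]; omega
  rw [h, Finset.sum_union]
  refine Finset.disjoint_left.mpr fun x hx hx' => ?_
  simp only [mem_Icc] at hx hx'; omega

lemma geom_Icc (α : ℝ) (a b : ℕ) :
    (α - 1) * ∑ m ∈ Icc a b, α ^ (b - m) = α ^ (b + 1 - a) - 1 := by
  rcases le_or_gt a (b + 1) with h | h
  · rw [← Finset.Ico_add_one_right_eq_Icc, Finset.sum_Ico_eq_sum_range]
    have h2 : ∀ i ∈ range (b + 1 - a), α ^ (b - (a + i)) = α ^ (b + 1 - a - 1 - i) := by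
      intro i hi; rw [mem_range] at hi; congr 1; omega
    rw [Finset.sum_congr rfl h2, Finset.sum_range_reflect, mul_comm, geom_sum_mul]
  · have h1 : Icc a b = ∅ := by rw [Finset.Icc_eq_empty_iff]; omega
    have h2 : b + 1 - a = 0 := by omega
    rw [h1, h2]; simp

lemma pull_alpha (α : ℝ) (T a : ℕ) (e e' : ℕ → ℕ) (he : ∀ j, a ≤ j → e j = e' j + 1) :
    ∑ j ∈ Icc a (T - 1), theta α T (j + 1) * α ^ (e j)
      = α * ∑ j ∈ Icc a (T - 1), theta α T (j + 1) * α ^ (e' j) := by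
  rw [Finset.mul_sum]
  refine Finset.sum_congr rfl fun j hj => ?_
  rw [mem_Icc] at hj
  rw [he j hj.1, pow_succ]; ring

lemma rel_below (α : ℝ) (T i m : ℕ) (hm : 1 ≤ m) (hmi : m < i) (hi : i + 1 < T) :
    entryLow α T i m = α * entryLow α T (i + 1) m
      + (α - 1) ^ 2 / 2 * ((α - 1) * theta α T (i + 1) - 1) * α ^ (i - m - 1) := by
  unfold entryLow
  rw [if_neg (by omega), if_neg (by omega), if_neg (by omega), if_neg (by omega)]
  rw [sum_Icc_split _ i i (T - 1) (by omega) (by omega), Finset.Icc_self, Finset.sum_singleton]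
  rw [pull_alpha α T (i + 1) (fun j => 2 * j - i - m) (fun j => 2 * j - (i + 1) - m)
    (fun j hj => by show 2 * j - i - m = 2 * j - (i + 1) - m + 1; omega)]
  rw [theta_succ α T i]
  have e1 : 2 * i - i - m = (i - m - 1) + 1 := by omega
  have e2 : i + 1 - m - 1 = (i - m - 1) + 1 := by omega
  rw [e1, e2]
  simp only [pow_succ]
  ring

lemma rel_right (α : ℝ) (T i m : ℕ) (hi : 1 ≤ i) (him : i + 2 ≤ m) (hm : m ≤ T) :
    entryLow α T m i = α * entryLow α T m (i + 1) := by
  rcases eq_or_ne m T with h | hmT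
  · subst h
    unfold entryLow
    rw [if_neg (show ¬(m = i) by omega), if_neg (show ¬(m = i + 1) by omega),
      if_pos rfl, if_pos rfl]
    have e : m - i - 1 = (m - (i + 1) - 1) + 1 := by omega
    rw [e, pow_succ]; ring
  · unfold entryLow
    rw [if_neg (show ¬(m = i) by omega), if_neg (show ¬(m = i + 1) by omega),
      if_neg hmT, if_neg hmT]
    rw [pull_alpha α T m (fun j => 2 * j - m - i) (fun j => 2 * j - m - (i + 1))
      (fun j hj => by show 2 * j - m - i = 2 * j - m - (i + 1) + 1; omega)]
    have e : m - i - 1 = (m - (i + 1) - 1) + 1 := by omega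
    rw [e, pow_succ]; ring

lemma rel_diag (α : ℝ) (T i : ℕ) (hi : 1 ≤ i) (hiT : i + 1 < T) :
    entryLow α T i i = α * entryLow α T (i + 1) i
      + (1 / 2 + (α - 1) ^ 2 * theta α T (i + 1) - α * (α - 1) / 2 * theta α T (i + 1)) := by
  unfold entryLow
  rw [if_pos rfl, if_neg (by omega), if_neg (by omega), if_neg (by omega)]
  rw [sum_Icc_split _ i i (T - 1) (by omega) (by omega), Finset.Icc_self, Finset.sum_singleton]
  rw [pull_alpha α T (i + 1) (fun j => 2 * j - 2 * i) (fun j => 2 * j - (i + 1) - i)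
    (fun j hj => by show 2 * j - 2 * i = 2 * j - (i + 1) - i + 1; omega)]
  have e1 : 2 * i - 2 * i = 0 := by omega
  have e2 : i + 1 - i - 1 = 0 := by omega
  rw [e1, e2]
  simp only [pow_zero]
  ring

lemma rel_super (α : ℝ) (T i : ℕ) (hi : 1 ≤ i) (hiT : i + 1 < T) :
    entryLow α T (i + 1) i = α * entryLow α T (i + 1) (i + 1)
      + ((α - 1) * theta α T (i + 1) - α) / 2 := by
  unfold entryLow
  rw [if_neg (by omega), if_neg (by omega), if_pos rfl, if_neg (by omega)]
  rw [pull_alpha α T (i + 1) (fun j => 2 * j - (i + 1) - i) (fun j => 2 * j - 2 * (i + 1))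
    (fun j hj => by show 2 * j - (i + 1) - i = 2 * j - 2 * (i + 1) + 1; omega)]
  have e2 : i + 1 - i - 1 = 0 := by omega
  rw [e2]
  simp only [pow_zero]
  ring

lemma row_id (α : ℝ) (T : ℕ) (hT : 2 ≤ T) :
    ∀ k i, 1 ≤ i → i + k = T →
    entryA α T i 1 = (α - 1) * (∑ m ∈ Icc 2 T, entryA α T i m)
      + (if i = 1 then (1 + (α - 1) ^ 2 * ((T : ℝ) - 1)) / 2 else 0) := by
  intro k
  induction k with
  | zero =>
    intro i hi1 hik
    have hTi : i = T := by omega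
    subst hTi
    obtain ⟨N, rfl⟩ : ∃ N, i = N + 2 := ⟨i - 2, by omega⟩
    rw [if_neg (by omega)]
    have hlast : entryA α (N + 2) (N + 2) (N + 2) = 1 / 2 := by
      unfold entryA entryLow
      rw [if_pos le_rfl, if_pos rfl, if_pos rfl]
    have hz : ∀ m ∈ Icc 2 (N + 1),
        entryA α (N + 2) (N + 2) m = (α - 1) / 2 * α ^ (N + 1 - m) := by
      intro m hm; rw [mem_Icc] at hm
      unfold entryA entryLow
      rw [if_pos (by omega), if_neg (by omega), if_pos rfl]
      rw [show N + 2 - m - 1 = N + 1 - m by omega]; ring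
    have hlhs : entryA α (N + 2) (N + 2) 1 = (α - 1) * α ^ N / 2 := by
      unfold entryA entryLow
      rw [if_pos (by omega), if_neg (by omega), if_pos rfl]
      rw [show N + 2 - 1 - 1 = N by omega]
    rw [hlhs, sum_Icc_split _ 2 (N + 1) (N + 2) (by omega) (by omega),
      Finset.Icc_self, Finset.sum_singleton, hlast, Finset.sum_congr rfl hz,
      ← Finset.mul_sum]
    have hg := geom_Icc α 2 (N + 1)
    rw [show N + 1 + 1 - 2 = N by omega] at hg
    linear_combination (-(α - 1) / 2) * hg
  | succ k ih =>
    intro i hi1 hik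
    rcases Nat.eq_zero_or_pos k with rfl | hkpos
    · -- i + 1 = T : next-to-last row (or T = 2, i = 1)
      rcases eq_or_ne i 1 with rfl | hi2
      · -- T = 2
        have hT2 : T = 2 := by omega
        subst hT2
        have h1 : entryA α 2 1 2 = (α - 1) / 2 := by
          unfold entryA entryLow
          rw [if_neg (by omega), if_neg (by omega), if_pos rfl]
          norm_num
        have h2 : entryA α 2 1 1 = 1 / 2 + (α - 1) ^ 2 := by
          unfold entryA entryLow
          rw [if_pos le_rfl, if_pos rfl, if_neg (by omega)]
          rw [show (2 : ℕ) - 1 = 1 by omega, Finset.Icc_self, Finset.sum_singleton]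
          rw [show (1 : ℕ) + 1 = 2 by omega, theta_T]
          norm_num
        rw [Finset.Icc_self, Finset.sum_singleton, h1, h2, if_pos rfl]
        push_cast; ring
      · -- i = M + 2, T = M + 3
        obtain ⟨M, rfl⟩ : ∃ M, i = M + 2 := ⟨i - 2, by omega⟩
        have hT3 : T = M + 3 := by omega
        subst hT3
        rw [if_neg (by omega)]
        have hθ : theta α (M + 3) (M + 2) = 2 - α := by
          rw [theta_eq]; push_cast; ring
        have hlhs : entryA α (M + 3) (M + 2) 1
            = (α - 1) * (2 - α) * α ^ M / 2 + (α - 1) ^ 2 * α ^ (M + 1) := by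
          unfold entryA entryLow
          rw [if_pos (by omega), if_neg (by omega), if_neg (by omega)]
          rw [show M + 3 - 1 = M + 2 by omega, Finset.Icc_self, Finset.sum_singleton,
            show M + 2 + 1 = M + 3 by omega, theta_T, hθ,
            show M + 2 - 1 - 1 = M by omega,
            show 2 * (M + 2) - (M + 2) - 1 = M + 1 by omega]
          ring
        have hz : ∀ m ∈ Icc 2 (M + 1), entryA α (M + 3) (M + 2) m
            = ((α - 1) * (2 - α) / 2 + (α - 1) ^ 2 * α) * α ^ (M + 1 - m) := by
          intro m hm; rw [mem_Icc] at hm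
          unfold entryA entryLow
          rw [if_pos (by omega), if_neg (by omega), if_neg (by omega)]
          rw [show M + 3 - 1 = M + 2 by omega, Finset.Icc_self, Finset.sum_singleton,
            show M + 2 + 1 = M + 3 by omega, theta_T, hθ,
            show M + 2 - m - 1 = M + 1 - m by omega,
            show 2 * (M + 2) - (M + 2) - m = (M + 1 - m) + 1 by omega, pow_succ]
          ring
        have hdiag : entryA α (M + 3) (M + 2) (M + 2) = 1 / 2 + (α - 1) ^ 2 := by
          unfold entryA entryLow
          rw [if_pos le_rfl, if_pos rfl, if_neg (by omega)]
          rw [show M + 3 - 1 = M + 2 by omega, Finset.Icc_self, Finset.sum_singleton,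
            show M + 2 + 1 = M + 3 by omega, theta_T,
            show 2 * (M + 2) - 2 * (M + 2) = 0 by omega]
          norm_num
        have hlast : entryA α (M + 3) (M + 2) (M + 3) = (α - 1) / 2 := by
          unfold entryA entryLow
          rw [if_neg (by omega), if_neg (by omega), if_pos rfl]
          rw [show M + 3 - (M + 2) - 1 = 0 by omega]
          norm_num
        rw [hlhs, sum_Icc_split _ 2 (M + 1) (M + 3) (by omega) (by omega),
          sum_Icc_split _ (M + 2) (M + 2) (M + 3) (by omega) (by omega),
          Finset.Icc_self, Finset.sum_singleton,
          show M + 2 + 1 = M + 3 by omega, Finset.Icc_self, Finset.sum_singleton,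
          hdiag, hlast, Finset.sum_congr rfl hz, ← Finset.mul_sum]
        have hg := geom_Icc α 2 (M + 1)
        rw [show M + 1 + 1 - 2 = M by omega] at hg
        linear_combination (-((α - 1) * (2 - α) / 2 + (α - 1) ^ 2 * α)) * hg
    · -- inductive step : i + 2 ≤ T
      have hi2T : i + 2 ≤ T := by omega
      have hI := ih (i + 1) (by omega) (by omega)
      rw [if_neg (by omega), add_zero] at hI
      rcases eq_or_ne i 1 with rfl | hi2
      · -- i = 1
        rw [if_pos rfl]
        have hθ : theta α T 2 = 1 - (α - 1) * ((T : ℝ) - 2) := by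
          rw [theta_eq]; push_cast; ring
        have h11 : entryA α T 1 1 = α * entryLow α T 2 1
            + (1 / 2 + (α - 1) ^ 2 * theta α T 2
               - α * (α - 1) / 2 * theta α T 2) := by
          unfold entryA
          rw [if_pos le_rfl]
          exact rel_diag α T 1 le_rfl (by omega)
        have h12 : entryA α T 1 2 = α * entryLow α T 2 2
            + ((α - 1) * theta α T 2 - α) / 2 := by
          unfold entryA
          rw [if_neg (by omega)]
          exact rel_super α T 1 le_rfl (by omega)
        have hz : ∀ m ∈ Icc 3 T, entryA α T 1 m = α * entryA α T 2 m := by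
          intro m hm; rw [mem_Icc] at hm
          unfold entryA
          rw [if_neg (by omega), if_neg (by omega)]
          exact rel_right α T 1 m le_rfl (by omega) hm.2
        have hS' : ∑ m ∈ Icc 2 T, entryA α T 2 m
            = entryLow α T 2 2 + ∑ m ∈ Icc 3 T, entryA α T 2 m := by
          rw [sum_Icc_split _ 2 2 T (by omega) (by omega), Finset.Icc_self,
            Finset.sum_singleton,
            show entryA α T 2 2 = entryLow α T 2 2 by unfold entryA; rw [if_pos le_rfl]]
        have hA21 : entryLow α T 2 1 = (α - 1) * ∑ m ∈ Icc 2 T, entryA α T 2 m := by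
          rw [← hI]
          unfold entryA
          rw [if_pos (by omega)]
        rw [h11, sum_Icc_split _ 2 2 T (by omega) (by omega), Finset.Icc_self,
          Finset.sum_singleton, h12, Finset.sum_congr rfl hz, ← Finset.mul_sum, hθ]
        push_cast
        linear_combination α * hA21 + α * (α - 1) * hS'
      · -- i = p + 2
        obtain ⟨p, rfl⟩ : ∃ p, i = p + 2 := ⟨i - 2, by omega⟩
        rw [if_neg (by omega)]
        have h1 : entryA α T (p + 2) 1 = α * entryLow α T (p + 2 + 1) 1
            + (α - 1) ^ 2 / 2 * ((α - 1) * theta α T (p + 2 + 1) - 1) * α ^ p := by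
          unfold entryA
          rw [if_pos (by omega)]
          rw [rel_below α T (p + 2) 1 le_rfl (by omega) (by omega)]
          rw [show p + 2 - 1 - 1 = p by omega]
        have hz1 : ∀ m ∈ Icc 2 (p + 1), entryA α T (p + 2) m
            = α * entryA α T (p + 2 + 1) m
              + (α - 1) ^ 2 / 2 * ((α - 1) * theta α T (p + 2 + 1) - 1) * α ^ (p + 1 - m) := by
          intro m hm; rw [mem_Icc] at hm
          unfold entryA
          rw [if_pos (by omega), if_pos (by omega)]
          rw [rel_below α T (p + 2) m (by omega) (by omega) (by omega)]
          rw [show p + 2 - m - 1 = p + 1 - m by omega]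
        have hz2 : entryA α T (p + 2) (p + 2) = α * entryA α T (p + 2 + 1) (p + 2)
            + (1 / 2 + (α - 1) ^ 2 * theta α T (p + 2 + 1)
               - α * (α - 1) / 2 * theta α T (p + 2 + 1)) := by
          unfold entryA
          rw [if_pos le_rfl, if_pos (by omega)]
          exact rel_diag α T (p + 2) (by omega) (by omega)
        have hz3 : entryA α T (p + 2) (p + 3) = α * entryA α T (p + 2 + 1) (p + 3)
            + ((α - 1) * theta α T (p + 2 + 1) - α) / 2 := by
          unfold entryA
          rw [if_neg (by omega), if_pos (by omega)]
          rw [show p + 3 = p + 2 + 1 by omega]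
          exact rel_super α T (p + 2) (by omega) (by omega)
        have hz4 : ∀ m ∈ Icc (p + 4) T, entryA α T (p + 2) m
            = α * entryA α T (p + 2 + 1) m := by
          intro m hm; rw [mem_Icc] at hm
          unfold entryA
          rw [if_neg (by omega), if_neg (by omega)]
          exact rel_right α T (p + 2) m (by omega) (by omega) hm.2
        have hsplit : ∀ g : ℕ → ℝ, ∑ m ∈ Icc 2 T, g m
            = ∑ m ∈ Icc 2 (p + 1), g m + g (p + 2) + g (p + 3) + ∑ m ∈ Icc (p + 4) T, g m := by
          intro g
          rw [sum_Icc_split g 2 (p + 1) T (by omega) (by omega),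
            sum_Icc_split g (p + 2) (p + 2) T (by omega) (by omega),
            sum_Icc_split g (p + 3) (p + 3) T (by omega) (by omega),
            Finset.Icc_self, Finset.sum_singleton, Finset.Icc_self, Finset.sum_singleton]
          ring
        rw [h1, hsplit (fun m => entryA α T (p + 2) m),
          Finset.sum_congr rfl hz1, hz2, hz3, Finset.sum_congr rfl hz4]
        rw [hsplit (fun m => entryA α T (p + 2 + 1) m),
          show entryA α T (p + 2 + 1) 1 = entryLow α T (p + 2 + 1) 1 by
            unfold entryA; rw [if_pos (by omega)]] at hI
        have hg := geom_Icc α 2 (p + 1)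
        rw [show p + 1 + 1 - 2 = p by omega] at hg
        have hexp : ∑ m ∈ Icc 2 (p + 1),
            (α * entryA α T (p + 2 + 1) m
              + (α - 1) ^ 2 / 2 * ((α - 1) * theta α T (p + 2 + 1) - 1) * α ^ (p + 1 - m))
            = α * ∑ m ∈ Icc 2 (p + 1), entryA α T (p + 2 + 1) m
              + (α - 1) ^ 2 / 2 * ((α - 1) * theta α T (p + 2 + 1) - 1)
                * ∑ m ∈ Icc 2 (p + 1), α ^ (p + 1 - m) := by
          rw [Finset.sum_add_distrib, Finset.mul_sum, Finset.mul_sum]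
        rw [hexp, ← Finset.mul_sum]
        linear_combination α * hI
          - ((α - 1) ^ 2 / 2 * ((α - 1) * theta α T (p + 2 + 1) - 1)) * hg

lemma theta_shift (α : ℝ) (S j : ℕ) : theta α (S + 1) (j + 1) = theta α S j := by
  unfold theta; push_cast; ring

lemma sum_Icc_shift (f : ℕ → ℝ) (a b : ℕ) :
    ∑ j ∈ Icc (a + 1) (b + 1), f j = ∑ j ∈ Icc a b, f (j + 1) := by
  rw [← Finset.map_add_right_Icc a b 1, Finset.sum_map]
  rfl

lemma key_shift (α : ℝ) (b i : ℕ) (e e' : ℕ → ℕ)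
    (he : ∀ j, i ≤ j → j ≤ b → e (j + 1) = e' j) :
    ∑ j ∈ Icc (i + 1) (b + 1), theta α (b + 1 + 1) (j + 1) * α ^ (e j)
      = ∑ j ∈ Icc i b, theta α (b + 1) (j + 1) * α ^ (e' j) := by
  rw [sum_Icc_shift]
  refine Finset.sum_congr rfl fun j hj => ?_
  rw [mem_Icc] at hj
  rw [theta_shift α (b + 1) (j + 1), he j hj.1 hj.2]

lemma entryLow_shift (α : ℝ) (S i k : ℕ) (hk : 1 ≤ k) (hik : k ≤ i) (hi : i ≤ S) :
    entryLow α (S + 1) (i + 1) (k + 1) = entryLow α S i k := by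
  obtain ⟨b, rfl⟩ : ∃ b, S = b + 1 := ⟨S - 1, by omega⟩
  have hbb : b + 1 + 1 - 1 = b + 1 := by omega
  have hb1 : b + 1 - 1 = b := by omega
  unfold entryLow
  rcases eq_or_ne i k with rfl | hne
  · rw [if_pos rfl, if_pos rfl]
    rcases eq_or_ne i (b + 1) with rfl | hiS
    · rw [if_pos rfl, if_pos rfl]
    · rw [if_neg (by omega), if_neg hiS, hbb, hb1]
      rw [key_shift α b i (fun j => 2 * j - 2 * (i + 1)) (fun j => 2 * j - 2 * i)
        (fun j h1 h2 => by show 2 * (j + 1) - 2 * (i + 1) = 2 * j - 2 * i; omega)]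
  · rw [if_neg (by omega), if_neg hne]
    rcases eq_or_ne i (b + 1) with rfl | hiS
    · rw [if_pos rfl, if_pos rfl]
      have h2 : b + 1 + 1 - (k + 1) - 1 = b + 1 - k - 1 := by omega
      rw [h2]
    · rw [if_neg (by omega), if_neg hiS, hbb, hb1]
      rw [theta_shift α (b + 1) i]
      rw [key_shift α b i (fun j => 2 * j - (i + 1) - (k + 1)) (fun j => 2 * j - i - k)
        (fun j h1 h2 => by show 2 * (j + 1) - (i + 1) - (k + 1) = 2 * j - i - k; omega)]
      have h3 : i + 1 - (k + 1) - 1 = i - k - 1 := by omega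
      rw [h3]

lemma entryA_shift (α : ℝ) (S i k : ℕ) (hi : 1 ≤ i) (hk : 1 ≤ k) (hiS : i ≤ S) (hkS : k ≤ S) :
    entryA α (S + 1) (i + 1) (k + 1) = entryA α S i k := by
  unfold entryA
  rcases le_or_gt k i with h | h
  · rw [if_pos (by omega), if_pos h, entryLow_shift α S i k hk h hiS]
  · rw [if_neg (by omega), if_neg (by omega), entryLow_shift α S k i hi (le_of_lt h) hkS]

lemma sum_Icc_two (f : ℕ → ℝ) (n : ℕ) :
    ∑ m ∈ Icc 2 (n + 1), f m = ∑ m ∈ range n, f (m + 2) := by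
  induction n with
  | zero => simp [show Icc 2 1 = (∅ : Finset ℕ) by rw [Finset.Icc_eq_empty_iff]; omega]
  | succ n ihn =>
    rw [Finset.sum_Icc_succ_top (by omega), ihn, Finset.sum_range_succ]

/-- det A_T = ((1 + β²(T-1))/2) det A_{T-1} for T = S+1 ≥ 2. -/
theorem det_recursion (α : ℝ) (S : ℕ) (hS : 1 ≤ S) :
    (Amat α (S + 1)).det = (1 + (α - 1) ^ 2 * (S : ℝ)) / 2 * (Amat α S).det := by
  classical
  set c : ℝ := (1 + (α - 1) ^ 2 * (S : ℝ)) / 2 with hc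
  set E : Matrix (Fin (S + 1)) (Fin (S + 1)) ℝ :=
    Matrix.of fun k l => if l = (0 : Fin (S + 1)) then (if k = 0 then (1 : ℝ) else -(α - 1))
      else if k = l then 1 else 0 with hE
  have hE0 : ∀ k : Fin (S + 1), E k 0 = if k = 0 then (1 : ℝ) else -(α - 1) := by
    intro k; rw [hE, Matrix.of_apply, if_pos rfl]
  have hEl : ∀ k l : Fin (S + 1), l ≠ 0 → E k l = if k = l then (1 : ℝ) else 0 := by
    intro k l hl; rw [hE, Matrix.of_apply, if_neg hl]
  have hdetE : E.det = 1 := by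
    rw [Matrix.det_of_lowerTriangular E]
    · refine Finset.prod_eq_one fun i _ => ?_
      by_cases h : i = (0 : Fin (S + 1))
      · subst h; rw [hE0, if_pos rfl]
      · rw [hEl i i h, if_pos rfl]
    · intro i j hij
      have hij' : i < j := hij
      have h1 : j ≠ 0 := by
        intro h; subst h; exact Fin.not_lt_zero i hij'
      have h2 : i ≠ j := ne_of_lt hij'
      rw [hEl i j h1, if_neg h2]
  have hrow := row_id α (S + 1) (by omega)
  have hmul : Amat α (S + 1) * E = Matrix.of fun i l =>
      if l = (0 : Fin (S + 1)) then (if i = 0 then c else 0) else Amat α (S + 1) i l := by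
    ext i l
    rw [Matrix.mul_apply, Matrix.of_apply]
    by_cases hl : l = (0 : Fin (S + 1))
    · subst hl
      rw [if_pos rfl]
      have hterm : ∀ k : Fin (S + 1), Amat α (S + 1) i k * E k 0
          = (if k = 0 then Amat α (S + 1) i k
             else -((α - 1) * entryA α (S + 1) (i.1 + 1) (k.1 + 1))) := by
        intro k
        rw [hE0 k]
        by_cases h : k = 0
        · rw [if_pos h, if_pos h, mul_one]
        · rw [if_neg h, if_neg h]
          show entryA α (S + 1) (i.1 + 1) (k.1 + 1) * -(α - 1) = _
          ring
      rw [Finset.sum_congr rfl fun k _ => hterm k, Fin.sum_univ_succ, if_pos rfl]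
      have hterm2 : ∀ x : Fin S, (if x.succ = (0 : Fin (S + 1)) then Amat α (S + 1) i x.succ
          else -((α - 1) * entryA α (S + 1) (i.1 + 1) (x.succ.1 + 1)))
          = -((α - 1) * (fun m => entryA α (S + 1) (i.1 + 1) (m + 2)) x.1) := by
        intro x
        rw [if_neg (Fin.succ_ne_zero x), Fin.val_succ]
      rw [Finset.sum_congr rfl fun x _ => hterm2 x, Finset.sum_neg_distrib, ← Finset.mul_sum,
        Fin.sum_univ_eq_sum_range (fun m => entryA α (S + 1) (i.1 + 1) (m + 2)) S]
      have hr := hrow (S + 1 - (i.1 + 1)) (i.1 + 1) (by omega) (by omega)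
      rw [sum_Icc_two (fun m => entryA α (S + 1) (i.1 + 1) m) S] at hr
      have hA0 : Amat α (S + 1) i 0 = entryA α (S + 1) (i.1 + 1) 1 := rfl
      rw [hA0, hr]
      by_cases hi : i = (0 : Fin (S + 1))
      · subst hi
        rw [if_pos rfl, if_pos (show ((0 : Fin (S + 1)) : ℕ) + 1 = 1 by simp), hc]
        push_cast
        ring
      · have h6 : (i : ℕ) ≠ 0 := fun h => hi (Fin.ext (by rw [h]; exact (Fin.val_zero _).symm))
        have h5 : i.1 + 1 ≠ 1 := by omega
        rw [if_neg h5, if_neg hi]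
        ring
    · rw [if_neg hl, Finset.sum_congr rfl fun k _ => by rw [hEl k l hl]]
      simp only [mul_ite, mul_one, mul_zero]
      rw [Finset.sum_ite_eq' Finset.univ l (fun k => Amat α (S + 1) i k),
        if_pos (Finset.mem_univ l)]
  have hdet1 : (Amat α (S + 1)).det = ((Amat α (S + 1)) * E).det := by
    rw [Matrix.det_mul, hdetE, mul_one]
  rw [hdet1, hmul]
  rw [Matrix.det_succ_column_zero]
  rw [Finset.sum_eq_single (0 : Fin (S + 1))]
  · rw [Matrix.of_apply, if_pos rfl, if_pos rfl]
    have hsub : (Matrix.of fun i l =>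
        if l = (0 : Fin (S + 1)) then (if i = 0 then c else 0) else Amat α (S + 1) i l).submatrix
          (Fin.succAbove 0) Fin.succ = Amat α S := by
      ext i k
      rw [Matrix.submatrix_apply, Fin.succAbove_zero, Matrix.of_apply,
        if_neg (Fin.succ_ne_zero k)]
      show entryA α (S + 1) (i.succ.1 + 1) (k.succ.1 + 1) = entryA α S (i.1 + 1) (k.1 + 1)
      rw [Fin.val_succ, Fin.val_succ]
      exact entryA_shift α S (i.1 + 1) (k.1 + 1) (by omega) (by omega)
        (by have := i.2; omega) (by have := k.2; omega)
    rw [hsub, Fin.val_zero, pow_zero, one_mul]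
  · intro b _ hb
    rw [Matrix.of_apply, if_pos rfl, if_neg hb]
    ring
  · intro h; exact absurd (Finset.mem_univ _) h
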